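/- Let M ∈ ℕ, and for each i ∈ {1,…,M} let νᵢ be a finite Borel measure on ℝ and yᵢ ∈ ℝ. Let D = {i : νᵢ({yᵢ}) = 0} and d = |D|. Assume that for each i ∈ D there exist δᵢ > 0 and a nonnegative measurable function fᵢ : ℝ → ℝ, continuous at yᵢ with fᵢ(yᵢ) > 0, such that the restriction of νᵢ to (yᵢ − δᵢ, yᵢ + δᵢ) equals the restriction of (Lebesgue measure with density fᵢ) to that interval. Set w = (∏_{i ∉ D} νᵢ({yᵢ})) · (∏_{i ∈ D} fᵢ(yᵢ)). Then w > 0 and the lexicographic limit holds: (∏_{i=1}^{M} νᵢ(Iₙ(yᵢ))) / (w · 2^{−dn}) → 1 as n → ∞. -/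

import Mathlib

open MeasureTheory Filter Topology


noncomputable def dyadApprox (n : ℕ) (y : ℝ) : ℝ :=
  (2 : ℝ) ^ (-(n : ℤ)) * (⌈(2 : ℝ) ^ n * y⌉ : ℝ)

noncomputable def dyadCell (n : ℕ) (y : ℝ) : Set ℝ :=
  Set.Ioc (dyadApprox n y - (2 : ℝ) ^ (-(n : ℤ))) (dyadApprox n y)

lemma two_zpow_pos (n : ℕ) : (0:ℝ) < (2 : ℝ) ^ (-(n : ℤ)) := zpow_pos (by norm_num) _

lemma dyad_le (n : ℕ) (y : ℝ) : y ≤ dyadApprox n y := by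
  have h : (2:ℝ)^n * y ≤ (⌈(2 : ℝ) ^ n * y⌉ : ℝ) := Int.le_ceil _
  have h2 : (0:ℝ) < (2:ℝ)^(-(n:ℤ)) := two_zpow_pos n
  have := mul_le_mul_of_nonneg_left h h2.le
  rw [← mul_assoc] at this
  have he : (2:ℝ)^(-(n:ℤ)) * (2:ℝ)^n = 1 := by
    rw [show ((2:ℝ)^n = (2:ℝ)^(n:ℤ)) from (zpow_natCast 2 n).symm, ← zpow_add₀ (by norm_num : (2:ℝ) ≠ 0)]
    simp
  rw [he, one_mul] at this
  exact this

lemma dyad_lt (n : ℕ) (y : ℝ) : dyadApprox n y < y + (2 : ℝ) ^ (-(n : ℤ)) := by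
  have h : (⌈(2 : ℝ) ^ n * y⌉ : ℝ) < (2:ℝ)^n * y + 1 := Int.ceil_lt_add_one _
  have h2 : (0:ℝ) < (2:ℝ)^(-(n:ℤ)) := two_zpow_pos n
  have := mul_lt_mul_of_pos_left h h2
  rw [mul_add, ← mul_assoc, mul_one] at this
  have he : (2:ℝ)^(-(n:ℤ)) * (2:ℝ)^n = 1 := by
    rw [show ((2:ℝ)^n = (2:ℝ)^(n:ℤ)) from (zpow_natCast 2 n).symm, ← zpow_add₀ (by norm_num : (2:ℝ) ≠ 0)]
    simp
  rw [he, one_mul] at this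
  exact this

lemma mem_dyadCell (n : ℕ) (y : ℝ) : y ∈ dyadCell n y :=
  ⟨by have h1 := dyad_lt n y; have h2 := two_zpow_pos n; linarith, dyad_le n y⟩

lemma dyadCell_subset (n : ℕ) (y : ℝ) :
    dyadCell n y ⊆ Set.Ioc (y - (2 : ℝ) ^ (-(n : ℤ))) (y + (2 : ℝ) ^ (-(n : ℤ))) := by
  have h1 := dyad_le n y
  have h2 := dyad_lt n y
  intro x hx
  obtain ⟨hl, hr⟩ := hx
  exact ⟨by linarith, by linarith⟩

lemma tendsto_two_zpow_neg : Tendsto (fun n : ℕ => (2:ℝ)^(-(n:ℤ))) atTop (𝓝 0) := by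
  have : (fun n : ℕ => (2:ℝ)^(-(n:ℤ))) = fun n : ℕ => ((1:ℝ)/2)^n := by
    funext n
    rw [zpow_neg, zpow_natCast, one_div, inv_pow]
  rw [this]
  exact tendsto_pow_atTop_nhds_zero_of_lt_one (by norm_num) (by norm_num)

lemma eventually_two_zpow_lt {ε : ℝ} (hε : 0 < ε) :
    ∀ᶠ n : ℕ in atTop, (2:ℝ)^(-(n:ℤ)) < ε := by
  have := tendsto_two_zpow_neg
  exact this.eventually (eventually_lt_nhds hε)

lemma volume_dyadCell (n : ℕ) (y : ℝ) :
    volume (dyadCell n y) = ENNReal.ofReal ((2:ℝ)^(-(n:ℤ))) := by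
  rw [dyadCell, Real.volume_Ioc]
  ring_nf

lemma measurableSet_dyadCell (n : ℕ) (y : ℝ) : MeasurableSet (dyadCell n y) :=
  measurableSet_Ioc


lemma iInter_dyad (y : ℝ) :
    ⋂ n : ℕ, Set.Ioc (y - (2 : ℝ) ^ (-(n : ℤ))) (y + (2 : ℝ) ^ (-(n : ℤ))) = {y} := by
  ext x
  simp only [Set.mem_iInter, Set.mem_Ioc, Set.mem_singleton_iff]
  constructor
  · intro h
    have hle : x ≤ y := by
      by_contra hlt
      push_neg at hlt
      obtain ⟨n, hn⟩ := (eventually_two_zpow_lt (sub_pos.mpr hlt)).exists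
      have := (h n).2
      linarith
    have hge : y ≤ x := by
      by_contra hlt
      push_neg at hlt
      obtain ⟨n, hn⟩ := (eventually_two_zpow_lt (sub_pos.mpr hlt)).exists
      have := (h n).1
      linarith
    linarith
  · rintro rfl
    exact fun n => ⟨by linarith [two_zpow_pos n], by linarith [two_zpow_pos n]⟩

lemma pointmass_tendsto (ν : Measure ℝ) [IsFiniteMeasure ν] (y : ℝ) :
    Tendsto (fun n : ℕ => (ν (dyadCell n y)).toReal) atTop (𝓝 (ν {y}).toReal) := by
  set s : ℕ → Set ℝ := fun n => Set.Ioc (y - (2 : ℝ) ^ (-(n : ℤ))) (y + (2 : ℝ) ^ (-(n : ℤ)))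
  have hanti : Antitone s := by
    intro m n hmn
    have h : (2:ℝ)^(-(n:ℤ)) ≤ (2:ℝ)^(-(m:ℤ)) := by
      apply zpow_le_zpow_right₀ (by norm_num : (1:ℝ) ≤ 2)
      exact neg_le_neg (by exact_mod_cast hmn)
    exact Set.Ioc_subset_Ioc (by linarith) (by linarith)
  have hlim : Tendsto (fun n => ν (s n)) atTop (𝓝 (ν {y})) := by
    have := MeasureTheory.tendsto_measure_iInter_atTop (μ := ν) (s := s)
      (fun n => (measurableSet_Ioc).nullMeasurableSet) hanti ⟨0, measure_ne_top ν _⟩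
    rwa [iInter_dyad y] at this
  have hsq : Tendsto (fun n => ν (dyadCell n y)) atTop (𝓝 (ν {y})) := by
    apply tendsto_of_tendsto_of_tendsto_of_le_of_le tendsto_const_nhds hlim
    · intro n
      exact measure_mono (Set.singleton_subset_iff.mpr (mem_dyadCell n y))
    · intro n
      exact measure_mono (dyadCell_subset n y)
  exact (ENNReal.tendsto_toReal (measure_ne_top ν _)).comp hsq


lemma density_tendsto (ν : Measure ℝ) [IsFiniteMeasure ν] (y δ : ℝ) (f : ℝ → ℝ)
    (hδ : 0 < δ) (hmeas : Measurable f) (hnn : ∀ t, 0 ≤ f t)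
    (hcont : ContinuousAt f y) (hpos : 0 < f y)
    (hres : ν.restrict (Set.Ioo (y - δ) (y + δ)) =
      (volume.withDensity fun t => ENNReal.ofReal (f t)).restrict (Set.Ioo (y - δ) (y + δ))) :
    Tendsto (fun n : ℕ => (ν (dyadCell n y)).toReal * (2:ℝ)^(n:ℕ)) atTop (𝓝 (f y)) := by
  rw [Metric.tendsto_atTop]
  intro ε hε
  have hcont' : ∀ᶠ t in 𝓝 y, dist (f t) (f y) < ε / 2 :=
    hcont (Metric.ball_mem_nhds (f y) (by linarith))
  rw [Metric.eventually_nhds_iff] at hcont'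
  obtain ⟨η, hη, hball⟩ := hcont'
  set η' := min η δ with hη'
  have hη'pos : 0 < η' := lt_min hη hδ
  obtain ⟨N, hN⟩ := (eventually_atTop.mp (eventually_two_zpow_lt hη'pos))
  refine ⟨N, fun n hn => ?_⟩
  have hsmall : (2:ℝ)^(-(n:ℤ)) < η' := hN n hn
  have hsubδ : dyadCell n y ⊆ Set.Ioo (y - δ) (y + δ) := by
    intro x hx
    obtain ⟨h1, h2⟩ := dyadCell_subset n y hx
    have : η' ≤ δ := min_le_right _ _
    constructor <;> nlinarith
  have hclose : ∀ x ∈ dyadCell n y, |f x - f y| ≤ ε / 2 := by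
    intro x hx
    obtain ⟨h1, h2⟩ := dyadCell_subset n y hx
    have hd : dist x y < η := by
      rw [Real.dist_eq, abs_lt]
      have : η' ≤ η := min_le_left _ _
      constructor <;> nlinarith
    have := hball hd
    rw [Real.dist_eq] at this
    linarith [le_of_lt this]
  -- compute ν (dyadCell n y)
  have hcell : ν (dyadCell n y) = ∫⁻ t in dyadCell n y, ENNReal.ofReal (f t) := by
    have h1 : ν (dyadCell n y) = ν.restrict (Set.Ioo (y - δ) (y + δ)) (dyadCell n y) := by
      rw [Measure.restrict_apply (measurableSet_dyadCell n y),
        Set.inter_eq_left.mpr hsubδ]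
    rw [h1, hres, Measure.restrict_apply (measurableSet_dyadCell n y),
      Set.inter_eq_left.mpr hsubδ, withDensity_apply _ (measurableSet_dyadCell n y)]
  have hvol := volume_dyadCell n y
  have hupper : ν (dyadCell n y) ≤ ENNReal.ofReal ((f y + ε/2) * (2:ℝ)^(-(n:ℤ))) := by
    rw [hcell]
    calc ∫⁻ t in dyadCell n y, ENNReal.ofReal (f t)
        ≤ ∫⁻ _ in dyadCell n y, ENNReal.ofReal (f y + ε/2) := by
          apply setLIntegral_mono measurable_const
          intro x hx
          apply ENNReal.ofReal_le_ofReal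
          have := hclose x hx
          rw [abs_le] at this
          linarith [this.1]
      _ = ENNReal.ofReal (f y + ε/2) * volume (dyadCell n y) := setLIntegral_const _ _
      _ = ENNReal.ofReal ((f y + ε/2) * (2:ℝ)^(-(n:ℤ))) := by
          rw [hvol, ← ENNReal.ofReal_mul (by linarith)]
  have hlower : ENNReal.ofReal ((f y - ε/2) * (2:ℝ)^(-(n:ℤ))) ≤ ν (dyadCell n y) := by
    rw [hcell]
    calc ENNReal.ofReal ((f y - ε/2) * (2:ℝ)^(-(n:ℤ)))
        = ENNReal.ofReal (f y - ε/2) * volume (dyadCell n y) := by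
          rw [hvol, ← ENNReal.ofReal_mul' (two_zpow_pos n).le]
      _ = ∫⁻ _ in dyadCell n y, ENNReal.ofReal (f y - ε/2) := (setLIntegral_const _ _).symm
      _ ≤ ∫⁻ t in dyadCell n y, ENNReal.ofReal (f t) := by
          apply setLIntegral_mono (hmeas.ennreal_ofReal)
          intro x hx
          apply ENNReal.ofReal_le_ofReal
          have := hclose x hx
          rw [abs_le] at this
          linarith [this.2]
  -- to reals
  have hfin : ν (dyadCell n y) ≠ ⊤ := measure_ne_top ν _
  have hup : (ν (dyadCell n y)).toReal ≤ (f y + ε/2) * (2:ℝ)^(-(n:ℤ)) :=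
    ENNReal.toReal_le_of_le_ofReal (by positivity) hupper
  have hlo : (f y - ε/2) * (2:ℝ)^(-(n:ℤ)) ≤ (ν (dyadCell n y)).toReal := by
    rcases le_or_gt (f y - ε/2) 0 with h | h
    · have : (f y - ε/2) * (2:ℝ)^(-(n:ℤ)) ≤ 0 := mul_nonpos_of_nonpos_of_nonneg h (two_zpow_pos n).le
      exact this.trans ENNReal.toReal_nonneg
    · exact (ENNReal.ofReal_le_iff_le_toReal hfin).mp hlower
  have hprod : (2:ℝ)^(-(n:ℤ)) * (2:ℝ)^(n:ℕ) = 1 := by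
    rw [show ((2:ℝ)^(n:ℕ) = (2:ℝ)^(n:ℤ)) from (zpow_natCast 2 n).symm,
      ← zpow_add₀ (by norm_num : (2:ℝ) ≠ 0)]
    simp
  have h2n : (0:ℝ) < (2:ℝ)^(n:ℕ) := by positivity
  rw [Real.dist_eq, abs_lt]
  constructor
  · nlinarith [mul_le_mul_of_nonneg_right hlo h2n.le]
  · nlinarith [mul_le_mul_of_nonneg_right hup h2n.le]


open Classical in
/-- Lexicographic limit for a product of finite measures of dyadic cells:
with `D` the set of indices at which the observation carries no point mass,
`d = |D|`, and `w` the product of the point masses off `D` and the densities on `D`,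
we have `w > 0` and `(∏ i, νᵢ(Iₙ(yᵢ))) / (w * 2^(-d*n)) → 1`. -/
theorem lexicographic_limit (M : ℕ) (ν : Fin M → Measure ℝ) [∀ i, IsFiniteMeasure (ν i)]
    (y : Fin M → ℝ) (δ : Fin M → ℝ) (f : Fin M → ℝ → ℝ)
    (D : Finset (Fin M)) (hD : D = Finset.univ.filter fun i => ν i {y i} = 0)
    (d : ℕ) (hd : d = D.card)
    (hmix : ∀ i ∈ D, 0 < δ i ∧ Measurable (f i) ∧ (∀ t, 0 ≤ f i t) ∧
      ContinuousAt (f i) (y i) ∧ 0 < f i (y i) ∧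
      (ν i).restrict (Set.Ioo (y i - δ i) (y i + δ i)) =
        (volume.withDensity fun t => ENNReal.ofReal (f i t)).restrict
          (Set.Ioo (y i - δ i) (y i + δ i)))
    (w : ℝ) (hw : w = (∏ i ∈ Dᶜ, (ν i {y i}).toReal) * ∏ i ∈ D, f i (y i)) :
    0 < w ∧
    Tendsto (fun n : ℕ =>
        (∏ i, (ν i (dyadCell n (y i))).toReal) / (w * (2 : ℝ) ^ (-(d * n : ℤ))))
      atTop (𝓝 1) := by
  -- point masses off D are positive
  have hpmem : ∀ i ∈ Dᶜ, 0 < (ν i {y i}).toReal := by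
    intro i hi
    rw [Finset.mem_compl, hD, Finset.mem_filter] at hi
    push_neg at hi
    exact ENNReal.toReal_pos (hi (Finset.mem_univ i)) (measure_ne_top _ _)
  have hfpos : ∀ i ∈ D, 0 < f i (y i) := fun i hi => (hmix i hi).2.2.2.2.1
  have hP : 0 < ∏ i ∈ Dᶜ, (ν i {y i}).toReal := Finset.prod_pos hpmem
  have hF : 0 < ∏ i ∈ D, f i (y i) := Finset.prod_pos hfpos
  have hwpos : 0 < w := by rw [hw]; exact mul_pos hP hF
  refine ⟨hwpos, ?_⟩
  -- per-index normalized factors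
  set g : Fin M → ℕ → ℝ := fun i n =>
    if i ∈ D then (ν i (dyadCell n (y i))).toReal * (2:ℝ)^(n:ℕ) / f i (y i)
    else (ν i (dyadCell n (y i))).toReal / (ν i {y i}).toReal with hg
  have hgi : ∀ i, Tendsto (fun n => g i n) atTop (𝓝 1) := by
    intro i
    by_cases hi : i ∈ D
    · obtain ⟨h1, h2, h3, h4, h5, h6⟩ := hmix i hi
      have := (density_tendsto (ν i) (y i) (δ i) (f i) h1 h2 h3 h4 h5 h6).div_const (f i (y i))
      rw [div_self h5.ne'] at this
      simpa [hg, hi] using this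
    · have := (pointmass_tendsto (ν i) (y i)).div_const (ν i {y i}).toReal
      rw [div_self (hpmem i (Finset.mem_compl.mpr hi)).ne'] at this
      simpa [hg, hi] using this
  have hprod : Tendsto (fun n => ∏ i, g i n) atTop (𝓝 1) := by
    have := tendsto_finset_prod (Finset.univ : Finset (Fin M)) (fun i _ => hgi i)
    simpa using this
  -- rewrite the target as the product of normalized factors
  have heq : ∀ n : ℕ,
      (∏ i, (ν i (dyadCell n (y i))).toReal) / (w * (2 : ℝ) ^ (-(d * n : ℤ))) =
      ∏ i, g i n := by
    intro n
    have hsplit : ∏ i, g i n = (∏ i ∈ D, g i n) * ∏ i ∈ Dᶜ, g i n :=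
      (Finset.prod_mul_prod_compl D _).symm
    have hDpart : ∏ i ∈ D, g i n =
        (∏ i ∈ D, (ν i (dyadCell n (y i))).toReal) * ((2:ℝ)^(n:ℕ))^d /
          ∏ i ∈ D, f i (y i) := by
      rw [hd]
      simp only [hg]
      rw [Finset.prod_congr rfl (fun i hi => if_pos hi), Finset.prod_div_distrib,
        Finset.prod_mul_distrib, Finset.prod_const]
    have hCpart : ∏ i ∈ Dᶜ, g i n =
        (∏ i ∈ Dᶜ, (ν i (dyadCell n (y i))).toReal) / ∏ i ∈ Dᶜ, (ν i {y i}).toReal := by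
      simp only [hg]
      rw [Finset.prod_congr rfl (fun i hi => if_neg (Finset.mem_compl.mp hi)),
        Finset.prod_div_distrib]
    have hall : ∏ i, (ν i (dyadCell n (y i))).toReal =
        (∏ i ∈ D, (ν i (dyadCell n (y i))).toReal) *
          ∏ i ∈ Dᶜ, (ν i (dyadCell n (y i))).toReal :=
      (Finset.prod_mul_prod_compl D _).symm
    have hzpow : (2 : ℝ) ^ (-(d * n : ℤ)) = (((2:ℝ)^(n:ℕ))^d)⁻¹ := by
      rw [zpow_neg, ← pow_mul, ← zpow_natCast (2:ℝ) (n * d)]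
      congr 1
      push_cast
      ring
    rw [hsplit, hDpart, hCpart, hall, hw, hzpow]
    have h2n : ((2:ℝ)^(n:ℕ))^d ≠ 0 := by positivity
    field_simp
  rw [show (fun n : ℕ =>
        (∏ i, (ν i (dyadCell n (y i))).toReal) / (w * (2 : ℝ) ^ (-(d * n : ℤ)))) =
      fun n => ∏ i, g i n from funext heq]
  exact hprod
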